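/- Let 0 ≤ x₀ < 𝔼[γ(X)·X] and suppose ES_p(γ(X)·X) ≥ x₀/(1−p). Let U be a uniform transform of X·γ(X) on (Ω, σ(X), ℙ), i.e. a σ(X)-measurable random variable uniformly distributed on [0,1] with F⁻¹_{Xγ(X)}(U) = X·γ(X) almost surely. Then the position X·𝟙_{U>p} satisfies 𝔼[γ(X)·X·𝟙_{U>p}] ≥ x₀, 0 ≤ X·𝟙_{U>p} ≤ X almost surely, and VaR_p(X·𝟙_{U>p}) = 0; hence it solves the problem of minimizing VaR_p(g(X)) over measurable g with 𝔼[γ(X)·g(X)] ≥ x₀ and 0 ≤ g(X) ≤ X almost surely. -/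

import Mathlib

open MeasureTheory Filter
open scoped ENNReal Topology Classical

noncomputable def VaR {Ω : Type*} [MeasurableSpace Ω] (P : Measure Ω) (p : ℝ) (Y : Ω → ℝ) : ℝ :=
  sInf {x : ℝ | p ≤ (P {ω | Y ω ≤ x}).toReal}

noncomputable def ES {Ω : Type*} [MeasurableSpace Ω] (P : Measure Ω) (p : ℝ) (Y : Ω → ℝ) : ℝ :=
  (1 - p)⁻¹ * ∫ u in p..(1 : ℝ), VaR P u Y

/-- The probability space is atomless. -/
def Atomless {Ω : Type*} [MeasurableSpace Ω] (P : Measure Ω) : Prop :=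
  ∀ s : Set Ω, MeasurableSet s → 0 < P s →
    ∃ t, t ⊆ s ∧ MeasurableSet t ∧ 0 < P t ∧ P t < P s

/-- The (topological) support of a measure on ℝ. -/
def msupport (μ : Measure ℝ) : Set ℝ :=
  {x | ∀ ε > 0, 0 < μ (Set.Ioo (x - ε) (x + ε))}

/-- The distribution `μ` has a density (w.r.t. Lebesgue measure) which is positive
on the support of `μ`. -/
def HasPositiveDensityOnSupport (μ : Measure ℝ) : Prop :=
  ∃ f : ℝ → ℝ, Measurable f ∧
    μ = MeasureTheory.volume.withDensity (fun x => ENNReal.ofReal (f x)) ∧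
    ∀ x ∈ msupport μ, 0 < f x

/-- The distribution `μ` has a density (w.r.t. Lebesgue measure) which is decreasing
(and positive) on the support of `μ`. -/
def HasDecreasingDensityOnSupport (μ : Measure ℝ) : Prop :=
  ∃ f : ℝ → ℝ, Measurable f ∧
    μ = MeasureTheory.volume.withDensity (fun x => ENNReal.ofReal (f x)) ∧
    AntitoneOn f (msupport μ) ∧ ∀ x ∈ msupport μ, 0 < f x

/-- Membership in the admissible set 𝒢_cm (complete market): measurable `g` with
budget constraint `𝔼[γ(X)·g(X)] ≥ x₀`. -/
def memGcm {Ω : Type*} [MeasurableSpace Ω] (P : Measure Ω) (X : Ω → ℝ) (γ : ℝ → ℝ)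
    (x₀ : ℝ) (g : ℝ → ℝ) : Prop :=
  Measurable g ∧ Integrable (fun ω => γ (X ω) * g (X ω)) P ∧
    x₀ ≤ ∫ ω, γ (X ω) * g (X ω) ∂P

/-- Membership in the admissible set 𝒢_ns (no short-selling):
`𝔼[γ(X)·g(X)] ≥ x₀` and `0 ≤ g(X) ≤ X` a.s. -/
def memGns {Ω : Type*} [MeasurableSpace Ω] (P : Measure Ω) (X : Ω → ℝ) (γ : ℝ → ℝ)
    (x₀ : ℝ) (g : ℝ → ℝ) : Prop :=
  Measurable g ∧ Integrable (fun ω => γ (X ω) * g (X ω)) P ∧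
    x₀ ≤ ∫ ω, γ (X ω) * g (X ω) ∂P ∧
    (∀ᵐ ω ∂P, 0 ≤ g (X ω) ∧ g (X ω) ≤ X ω)

/-- Membership in the admissible set 𝒢_bd (bounded positions):
`𝔼[γ(X)·g(X)] ≥ x₀` and `0 ≤ g(X) ≤ m` a.s. -/
def memGbd {Ω : Type*} [MeasurableSpace Ω] (P : Measure Ω) (X : Ω → ℝ) (γ : ℝ → ℝ)
    (x₀ m : ℝ) (g : ℝ → ℝ) : Prop :=
  Measurable g ∧ Integrable (fun ω => γ (X ω) * g (X ω)) P ∧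
    x₀ ≤ ∫ ω, γ (X ω) * g (X ω) ∂P ∧
    (∀ᵐ ω ∂P, 0 ≤ g (X ω) ∧ g (X ω) ≤ m)

lemma VaR_set_subset {Ω : Type*} [MeasurableSpace Ω] (P : Measure Ω) {p : ℝ} (hp : 0 < p)
    {Y : Ω → ℝ} (hY : ∀ᵐ ω ∂P, 0 ≤ Y ω) :
    {x : ℝ | p ≤ (P {ω | Y ω ≤ x}).toReal} ⊆ Set.Ici 0 := by
  intro x hx
  by_contra hneg
  rw [Set.mem_Ici] at hneg
  push_neg at hneg
  have hnull : P {ω | Y ω ≤ x} = 0 := by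
    apply measure_mono_null _ (ae_iff.mp hY)
    intro ω hω
    simp only [Set.mem_setOf_eq, not_le] at *
    exact lt_of_le_of_lt hω hneg
  simp only [Set.mem_setOf_eq, hnull, ENNReal.toReal_zero] at hx
  linarith

lemma VaR_nonneg {Ω : Type*} [MeasurableSpace Ω] (P : Measure Ω) {p : ℝ} (hp : 0 < p)
    {Y : Ω → ℝ} (hY : ∀ᵐ ω ∂P, 0 ≤ Y ω) : 0 ≤ VaR P p Y :=
  Real.sInf_nonneg fun _ hx => VaR_set_subset P hp hY hx

lemma VaR_monoOn {Ω : Type*} [MeasurableSpace Ω] (P : Measure Ω) [IsProbabilityMeasure P]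
    {Y : Ω → ℝ} (hY : ∀ᵐ ω ∂P, 0 ≤ Y ω) :
    MonotoneOn (fun u => VaR P u Y) (Set.Ioo (0:ℝ) 1) := by
  intro u hu v hv huv
  apply csInf_le_csInf
  · exact ⟨0, fun x hx => VaR_set_subset P hu.1 hY hx⟩
  · have hsets : Monotone (fun n : ℕ => {ω | Y ω ≤ (n:ℝ)}) := by
      intro a b hab ω hω
      simp only [Set.mem_setOf_eq] at *
      exact le_trans hω (by exact_mod_cast hab)
    have hunion : ⋃ n : ℕ, {ω | Y ω ≤ (n:ℝ)} = Set.univ := by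
      ext ω; simp only [Set.mem_iUnion, Set.mem_setOf_eq, Set.mem_univ, iff_true]
      exact ⟨⌈Y ω⌉₊, Nat.le_ceil _⟩
    have h1 : Tendsto (fun n : ℕ => P {ω | Y ω ≤ (n:ℝ)}) atTop (𝓝 1) := by
      have := tendsto_measure_iUnion_atTop (μ := P) hsets
      rwa [hunion, measure_univ] at this
    have h2 : Tendsto (fun n : ℕ => (P {ω | Y ω ≤ (n:ℝ)}).toReal) atTop (𝓝 1) := by
      have ht : Tendsto ENNReal.toReal (𝓝 (1:ℝ≥0∞)) (𝓝 (1:ℝ≥0∞).toReal) :=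
        ENNReal.tendsto_toReal (by simp)
      simpa [Function.comp_def] using ht.comp h1
    obtain ⟨n, hn⟩ := (h2.eventually (eventually_ge_nhds hv.2)).exists
    exact ⟨(n:ℝ), hn⟩
  · exact fun x hx => le_trans huv hx


theorem stmt3 {Ω : Type*} [MeasurableSpace Ω] (P : Measure Ω) [IsProbabilityMeasure P]
    (hPatomless : Atomless P)
    (X : Ω → ℝ) (hXmeas : Measurable X) (hXnonneg : ∀ᵐ ω ∂P, 0 ≤ X ω)
    (hXdens : HasPositiveDensityOnSupport (Measure.map X P))
    (γ : ℝ → ℝ) (hγcont : Continuous γ) (hγpos : ∀ x, 0 < γ x)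
    (hγint : Integrable (fun ω => γ (X ω)) P)
    (hγ1 : ∫ ω, γ (X ω) ∂P = 1)
    (hγXint : Integrable (fun ω => γ (X ω) * X ω) P)
    (p : ℝ) (hp : p ∈ Set.Ioo (0 : ℝ) 1)
    (x₀ : ℝ) (hx₀ : 0 ≤ x₀) (hx₀lt : x₀ < ∫ ω, γ (X ω) * X ω ∂P)
    (hES : x₀ / (1 - p) ≤ ES P p (fun ω => γ (X ω) * X ω))
    (U : Ω → ℝ)
    (hUmeas : Measurable[MeasurableSpace.comap X inferInstance] U)
    (hUunif : Measure.map U P = MeasureTheory.volume.restrict (Set.Icc (0 : ℝ) 1))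
    (hUqt : ∀ᵐ ω ∂P, VaR P (U ω) (fun ω' => X ω' * γ (X ω')) = X ω * γ (X ω)) :
    x₀ ≤ ∫ ω, γ (X ω) * (if p < U ω then X ω else 0) ∂P ∧
    (∀ᵐ ω ∂P, 0 ≤ (if p < U ω then X ω else 0) ∧ (if p < U ω then X ω else 0) ≤ X ω) ∧
    VaR P p (fun ω => if p < U ω then X ω else 0) = 0 ∧
    ∀ g : ℝ → ℝ, memGns P X γ x₀ g →
      VaR P p (fun ω => if p < U ω then X ω else 0) ≤ VaR P p (fun ω => g (X ω)) := by
  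
  obtain ⟨hp0, hp1⟩ := hp
  have h1p : (0:ℝ) < 1 - p := by linarith
  have hU : Measurable U := hUmeas.mono hXmeas.comap_le le_rfl
  have hZnonneg : ∀ᵐ ω ∂P, 0 ≤ X ω * γ (X ω) :=
    hXnonneg.mono fun ω hω => mul_nonneg hω (hγpos _).le
  have hYnonneg : ∀ᵐ ω ∂P, 0 ≤ (if p < U ω then X ω else 0) :=
    hXnonneg.mono fun ω hω => by by_cases hc : p < U ω <;> simp [hc, hω]
  have hPU : P {ω | U ω ≤ p} = ENNReal.ofReal p := by
    have hmap := Measure.map_apply (μ := P) hU (measurableSet_Iic (a := p))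
    rw [hUunif] at hmap
    have heq : P {ω | U ω ≤ p} = (volume.restrict (Set.Icc (0:ℝ) 1)) (Set.Iic p) := by
      exact hmap.symm
    rw [heq, Measure.restrict_apply measurableSet_Iic]
    have hset : Set.Iic p ∩ Set.Icc (0:ℝ) 1 = Set.Icc 0 p := by
      ext x; simp only [Set.mem_inter_iff, Set.mem_Iic, Set.mem_Icc]
      constructor
      · rintro ⟨ha, hb, _⟩; exact ⟨hb, ha⟩
      · rintro ⟨ha, hb⟩; exact ⟨hb, ha, le_trans hb hp1.le⟩
    rw [hset, Real.volume_Icc, sub_zero]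
  -- Part 3
  have hVaR0 : VaR P p (fun ω => if p < U ω then X ω else 0) = 0 := by
    have hsub : {ω | U ω ≤ p} ⊆ {ω | (if p < U ω then X ω else 0) ≤ 0} := by
      intro ω hω
      simp only [Set.mem_setOf_eq] at *
      simp [not_lt.mpr hω]
    have hmem : p ≤ (P {ω | (if p < U ω then X ω else 0) ≤ 0}).toReal := by
      have hle : ENNReal.ofReal p ≤ P {ω | (if p < U ω then X ω else 0) ≤ 0} :=
        hPU ▸ measure_mono hsub
      calc p = (ENNReal.ofReal p).toReal := (ENNReal.toReal_ofReal hp0.le).symm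
        _ ≤ _ := ENNReal.toReal_mono (measure_ne_top _ _) hle
    exact le_antisymm
      (csInf_le ⟨0, fun x hx => VaR_set_subset P hp0 hYnonneg hx⟩ hmem)
      (VaR_nonneg P hp0 hYnonneg)
  -- Part 1
  have hmonoh : MonotoneOn (fun u => VaR P u (fun ω' => X ω' * γ (X ω'))) (Set.Ioo (0:ℝ) 1) :=
    VaR_monoOn P hZnonneg
  set h : ℝ → ℝ := fun u => VaR P u (fun ω' => X ω' * γ (X ω')) with hhdef
  have hmeas_ind : AEStronglyMeasurable ((Set.Ioi p).indicator h)
      (volume.restrict (Set.Icc (0:ℝ) 1)) := by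
    have hm2 : AEMeasurable h
        ((volume.restrict (Set.Icc (0:ℝ) 1)).restrict (Set.Ioo p 1)) := by
      rw [Measure.restrict_restrict measurableSet_Ioo]
      have hss : Set.Ioo p 1 ∩ Set.Icc (0:ℝ) 1 = Set.Ioo p 1 := by
        apply Set.inter_eq_self_of_subset_left
        intro x hx; exact ⟨le_trans hp0.le hx.1.le, hx.2.le⟩
      rw [hss]
      exact aemeasurable_restrict_of_monotoneOn measurableSet_Ioo
        (hmonoh.mono (Set.Ioo_subset_Ioo hp0.le le_rfl))
    have hm1 : AEMeasurable ((Set.Ioo p 1).indicator h)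
        (volume.restrict (Set.Icc (0:ℝ) 1)) :=
      (aemeasurable_indicator_iff measurableSet_Ioo).mpr hm2
    apply AEStronglyMeasurable.congr hm1.aestronglyMeasurable
    apply ae_iff.mpr
    have hnull : (volume.restrict (Set.Icc (0:ℝ) 1)) (Set.Ici (1:ℝ)) = 0 := by
      rw [Measure.restrict_apply measurableSet_Ici]
      have hone : Set.Ici (1:ℝ) ∩ Set.Icc 0 1 = {1} := by
        ext x
        simp only [Set.mem_inter_iff, Set.mem_Ici, Set.mem_Icc, Set.mem_singleton_iff]
        constructor
        · rintro ⟨ha, _, hb⟩; linarith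
        · rintro rfl; norm_num
      rw [hone]; exact measure_singleton 1
    apply measure_mono_null _ hnull
    intro u hu
    simp only [Set.mem_setOf_eq] at hu
    by_contra hc
    rw [Set.mem_Ici, not_le] at hc
    apply hu
    by_cases h2 : p < u
    · rw [Set.indicator_of_mem (Set.mem_Ioo.mpr ⟨h2, hc⟩),
        Set.indicator_of_mem (Set.mem_Ioi.mpr h2)]
    · rw [Set.indicator_of_notMem (fun hx => h2 (Set.mem_Ioo.mp hx).1),
        Set.indicator_of_notMem (fun hx => h2 (Set.mem_Ioi.mp hx))]
  have key : ∫ ω, γ (X ω) * (if p < U ω then X ω else 0) ∂P = ∫ u in p..(1:ℝ), h u := by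
    have e1 : ∫ ω, γ (X ω) * (if p < U ω then X ω else 0) ∂P
        = ∫ ω, (Set.Ioi p).indicator h (U ω) ∂P := by
      apply integral_congr_ae
      filter_upwards [hUqt] with ω hω
      by_cases hc : p < U ω
      · rw [Set.indicator_of_mem (Set.mem_Ioi.mpr hc), if_pos hc]
        show γ (X ω) * X ω = VaR P (U ω) fun ω' => X ω' * γ (X ω')
        rw [hω]; ring
      · rw [Set.indicator_of_notMem (fun hx => hc (Set.mem_Ioi.mp hx)), if_neg hc, mul_zero]
    have e2 : ∫ ω, (Set.Ioi p).indicator h (U ω) ∂P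
        = ∫ u, (Set.Ioi p).indicator h u ∂(Measure.map U P) :=
      (integral_map hU.aemeasurable (hUunif ▸ hmeas_ind)).symm
    have e3 : ∫ u, (Set.Ioi p).indicator h u ∂(Measure.map U P)
        = ∫ u in Set.Ioc p 1, h u := by
      rw [hUunif, setIntegral_indicator measurableSet_Ioi]
      have hset2 : Set.Icc (0:ℝ) 1 ∩ Set.Ioi p = Set.Ioc p 1 := by
        ext x
        simp only [Set.mem_inter_iff, Set.mem_Icc, Set.mem_Ioi, Set.mem_Ioc]
        constructor
        · rintro ⟨⟨_, hb⟩, hcx⟩; exact ⟨hcx, hb⟩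
        · rintro ⟨ha, hb⟩; exact ⟨⟨le_trans hp0.le ha.le, hb⟩, ha⟩
      rw [hset2]
    rw [e1, e2, e3, intervalIntegral.integral_of_le hp1.le]
  have hfuneq : (fun ω => γ (X ω) * X ω) = (fun ω' => X ω' * γ (X ω')) :=
    funext fun ω => mul_comm _ _
  have hES' : x₀ ≤ ∫ u in p..(1:ℝ), h u := by
    have h2 := hES
    rw [ES, hfuneq] at h2
    rw [div_eq_mul_inv, mul_comm] at h2
    exact le_of_mul_le_mul_left h2 (inv_pos.mpr h1p)
  refine ⟨key ▸ hES', hXnonneg.mono fun ω hω => ?_, hVaR0, fun g hg => ?_⟩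
  · by_cases hc : p < U ω <;> simp [hc, hω]
  · rw [hVaR0]
    exact VaR_nonneg P hp0 (hg.2.2.2.mono fun ω hω => hω.1)
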